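/- Let t > 1 and 0 ≤ θ < (t−1)/(2t). Let MN and PQ be two edges of a greedy t-spanner in the Euclidean plane that intersect at an interior point and make angle at most θ with each other. Then neither of the projections of the segments on a common baseline direction is contained in the other (they are endpoint-ordered). -/

import Mathlib

open Classical RealInnerProductSpace

noncomputable section

/-- The two-dimensional Euclidean plane. -/
abbrev E2 := EuclideanSpace ℝ (Fin 2)


noncomputable section

/-- The length of a path given as a list of points: the sum of the metric
distances of consecutive points. -/
def chainLength {X : Type*} [PseudoMetricSpace X] : List X → ℝ
  | [] => 0
  | [_] => 0
  | a :: b :: rest => dist a b + chainLength (b :: rest)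

/-- `p` is a path from `u` to `v` using only (undirected) edges from `E`. -/
def IsPathIn {X : Type*} (E : Set (X × X)) (p : List X) (u v : X) : Prop :=
  p ≠ [] ∧ p.head? = some u ∧ p.getLast? = some v ∧
    p.Chain' (fun a b => (a, b) ∈ E ∨ (b, a) ∈ E)

/-- One step of the naive greedy spanner algorithm: add the pair `e` as an edge
unless a path of length at most `t · dist e.1 e.2` already exists. -/
def greedyStep {X : Type*} [PseudoMetricSpace X] (t : ℝ)
    (S : Finset (X × X)) (e : X × X) : Finset (X × X) :=
  if ∃ p : List X, IsPathIn (↑S) p e.1 e.2 ∧ chainLength p ≤ t * dist e.1 e.2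
  then S else insert e S

/-- The naive greedy spanner algorithm run over a list of pairs. -/
def naiveGreedy {X : Type*} [PseudoMetricSpace X] (t : ℝ) (l : List (X × X)) :
    Finset (X × X) :=
  l.foldl (greedyStep t) ∅

set_option linter.unusedSectionVars false

variable {X : Type*} [PseudoMetricSpace X]

lemma chainLength_nonneg : ∀ (p : List X), 0 ≤ chainLength p
  | [] => le_refl 0
  | [_] => le_refl 0
  | a :: b :: rest => by
      have := chainLength_nonneg (b :: rest)
      simp only [chainLength]
      have := dist_nonneg (x := a) (y := b)
      linarith

lemma chainLength_append : ∀ (xs : List X) {a b : X} (ys : List X),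
    xs.getLast? = some a → ys.head? = some b →
    chainLength (xs ++ ys) = chainLength xs + dist a b + chainLength ys
  | [], _, _, _, hx, _ => by simp at hx
  | [x], a, b, ys, hx, hy => by
      obtain ⟨ys', rfl⟩ : ∃ ys', ys = b :: ys' := by
        cases ys with
        | nil => simp at hy
        | cons c ys' => simp at hy; exact ⟨ys', by rw [hy]⟩
      simp only [List.getLast?_singleton, Option.some.injEq] at hx
      subst hx
      simp [chainLength]
  | x :: x' :: xs', a, b, ys, hx, hy => by
      have hx' : (x' :: xs').getLast? = some a := by
        rw [← hx, List.getLast?_cons_cons]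
      have IH := chainLength_append (x' :: xs') ys hx' hy
      simp only [List.cons_append] at IH ⊢
      simp only [chainLength]
      rw [IH]; ring

lemma chainLength_reverse : ∀ (p : List X), chainLength p.reverse = chainLength p
  | [] => rfl
  | [_] => rfl
  | a :: b :: rest => by
      have IH := chainLength_reverse (b :: rest)
      have h1 : (a :: b :: rest).reverse = (b :: rest).reverse ++ [a] := by simp
      have h2 : (b :: rest).reverse.getLast? = some b := by
        rw [List.getLast?_reverse]; rfl
      rw [h1, chainLength_append _ [a] h2 rfl, IH]
      simp only [chainLength]
      rw [dist_comm]; ring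

variable {X : Type*} [PseudoMetricSpace X]

lemma IsPathIn.mono {E E' : Set (X × X)} {p : List X} {u v : X}
    (hE : E ⊆ E') (h : IsPathIn E p u v) : IsPathIn E' p u v :=
  ⟨h.1, h.2.1, h.2.2.1, h.2.2.2.imp fun _ _ hab => hab.imp (fun h => hE h) (fun h => hE h)⟩

lemma IsPathIn.reverse {E : Set (X × X)} {p : List X} {u v : X}
    (h : IsPathIn E p u v) : IsPathIn E p.reverse v u := by
  obtain ⟨hne, hh, hl, hc⟩ := h
  refine ⟨by simpa using hne, ?_, ?_, ?_⟩
  · rw [List.head?_reverse]; exact hl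
  · rw [List.getLast?_reverse]; exact hh
  · change List.IsChain _ _; rw [List.isChain_reverse]
    exact hc.imp fun _ _ hab => hab.symm

lemma path_concat {E : Set (X × X)} {p₁ p₂ : List X} {m p q n : X}
    (h₁ : IsPathIn E p₁ m p) (h₂ : IsPathIn E p₂ q n) (hpq : (p, q) ∈ E ∨ (q, p) ∈ E) :
    IsPathIn E (p₁ ++ p₂) m n ∧
      chainLength (p₁ ++ p₂) = chainLength p₁ + dist p q + chainLength p₂ := by
  obtain ⟨hne₁, hh₁, hl₁, hc₁⟩ := h₁
  obtain ⟨hne₂, hh₂, hl₂, hc₂⟩ := h₂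
  refine ⟨⟨by simp [hne₁], ?_, ?_, ?_⟩, ?_⟩
  · rw [List.head?_append_of_ne_nil _ hne₁]; exact hh₁
  · rw [List.getLast?_append_of_ne_nil _ hne₂]; exact hl₂
  · change List.IsChain _ _; rw [List.isChain_append]
    refine ⟨hc₁, hc₂, ?_⟩
    intro x hx y hy
    rw [hl₁] at hx; rw [hh₂] at hy
    simp only [Option.mem_def, Option.some.injEq] at hx hy
    subst hx; subst hy; exact hpq
  · exact chainLength_append p₁ p₂ hl₁ hh₂
variable {X : Type*} [PseudoMetricSpace X]

lemma subset_greedyStep (t : ℝ) (S : Finset (X × X)) (e : X × X) : S ⊆ greedyStep t S e := by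
  unfold greedyStep; split
  · exact subset_rfl
  · exact Finset.subset_insert _ _

lemma subset_foldl (t : ℝ) : ∀ (l : List (X × X)) (S : Finset (X × X)),
    S ⊆ l.foldl (greedyStep t) S
  | [], _ => subset_rfl
  | e :: l, S => (subset_greedyStep t S e).trans (subset_foldl t l (greedyStep t S e))

lemma foldl_prefix_subset (t : ℝ) {l₁ l₂ : List (X × X)} (h : l₁ <+: l₂) :
    List.foldl (greedyStep t) ∅ l₁ ⊆ List.foldl (greedyStep t) ∅ l₂ := by
  obtain ⟨r, rfl⟩ := h
  rw [List.foldl_append]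
  exact subset_foldl t r _

lemma mem_foldl_analysis (t : ℝ) (l : List (X × X)) (e : X × X)
    (he : e ∈ List.foldl (greedyStep t) ∅ l) :
    ∃ l₁ l₂, l = l₁ ++ e :: l₂ ∧
      ¬ ∃ p : List X, IsPathIn (↑(List.foldl (greedyStep t) ∅ l₁)) p e.1 e.2 ∧
        chainLength p ≤ t * dist e.1 e.2 := by
  induction l using List.reverseRecOn with
  | nil => simp at he
  | append_singleton l x ih =>
    rw [List.foldl_append, List.foldl_cons, List.foldl_nil] at he
    by_cases hcond : ∃ p : List X, IsPathIn (↑(List.foldl (greedyStep t) ∅ l)) p x.1 x.2 ∧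
        chainLength p ≤ t * dist x.1 x.2
    · rw [greedyStep, if_pos hcond] at he
      obtain ⟨l₁, l₂, rfl, hno⟩ := ih he
      exact ⟨l₁, l₂ ++ [x], by simp, hno⟩
    · rw [greedyStep, if_neg hcond] at he
      rcases Finset.mem_insert.mp he with rfl | he
      · exact ⟨l, [], rfl, hcond⟩
      · obtain ⟨l₁, l₂, rfl, hno⟩ := ih he
        exact ⟨l₁, l₂ ++ [x], by simp, hno⟩

lemma mem_insert_step (t : ℝ) (l₁ : List (X × X)) (e : X × X)
    (hno : ¬ ∃ p : List X, IsPathIn (↑(List.foldl (greedyStep t) ∅ l₁)) p e.1 e.2 ∧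
        chainLength p ≤ t * dist e.1 e.2) :
    e ∈ List.foldl (greedyStep t) ∅ (l₁ ++ [e]) := by
  rw [List.foldl_append, List.foldl_cons, List.foldl_nil, greedyStep, if_neg hno]
  exact Finset.mem_insert_self _ _

lemma eq_append_of_lt_length {α : Type*} : ∀ {l₁ k₁ : List α} {e f : α} {l₂ k₂ : List α},
    l₁ ++ e :: l₂ = k₁ ++ f :: k₂ → l₁.length < k₁.length →
    ∃ m, k₁ = l₁ ++ e :: m ∧ l₂ = m ++ f :: k₂
  | [], [], _, _, _, _, _, hlen => absurd hlen (lt_irrefl 0)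
  | [], c :: k₁, e, f, l₂, k₂, h, _ => by
      rw [List.nil_append, List.cons_append, List.cons.injEq] at h
      obtain ⟨rfl, h2⟩ := h
      exact ⟨k₁, rfl, h2⟩
  | a :: l₁, [], e, f, l₂, k₂, h, hlen => by simp at hlen
  | a :: l₁, c :: k₁, e, f, l₂, k₂, h, hlen => by
      simp only [List.cons_append, List.cons.injEq] at h
      obtain ⟨rfl, h⟩ := h
      obtain ⟨m, h1, h2⟩ := eq_append_of_lt_length h (by simpa using hlen)
      exact ⟨m, by simp [h1], h2⟩
lemma spanner_of_edge_mem {t : ℝ} (ht : 1 ≤ t) {l₁ : List (X × X)} {a b : X}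
    (h : (a, b) ∈ l₁) :
    ∃ p : List X, IsPathIn (↑(List.foldl (greedyStep t) ∅ l₁)) p a b ∧
      chainLength p ≤ t * dist a b := by
  obtain ⟨x, y, rfl⟩ := List.append_of_mem h
  by_cases hcond : ∃ p : List X, IsPathIn (↑(List.foldl (greedyStep t) ∅ x)) p a b ∧
      chainLength p ≤ t * dist a b
  · obtain ⟨p, hp, hlen⟩ := hcond
    refine ⟨p, hp.mono ?_, hlen⟩
    exact_mod_cast foldl_prefix_subset t ⟨(a, b) :: y, rfl⟩
  · have hmem : (a, b) ∈ List.foldl (greedyStep t) ∅ (x ++ [(a, b)]) :=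
      mem_insert_step t x (a, b) hcond
    have hsub : List.foldl (greedyStep t) ∅ (x ++ [(a, b)]) ⊆
        List.foldl (greedyStep t) ∅ (x ++ (a, b) :: y) :=
      foldl_prefix_subset t ⟨y, by simp⟩
    refine ⟨[a, b], ⟨by simp, rfl, rfl, ?_⟩, ?_⟩
    · exact List.isChain_pair.mpr (Or.inl (by exact_mod_cast hsub hmem))
    · simp only [chainLength]
      have := dist_nonneg (x := a) (y := b)
      nlinarith

lemma spanner_of_mem {t : ℝ} (ht : 1 ≤ t) {l₁ : List (X × X)} {a b : X}
    (h : (a, b) ∈ l₁ ∨ (b, a) ∈ l₁ ∨ a = b) :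
    ∃ p : List X, IsPathIn (↑(List.foldl (greedyStep t) ∅ l₁)) p a b ∧
      chainLength p ≤ t * dist a b := by
  rcases h with h | h | rfl
  · exact spanner_of_edge_mem ht h
  · obtain ⟨p, hp, hlen⟩ := spanner_of_edge_mem ht h
    refine ⟨p.reverse, hp.reverse, ?_⟩
    rw [chainLength_reverse, dist_comm]
    exact hlen
  · refine ⟨[a], ⟨by simp, rfl, rfl, List.isChain_singleton a⟩, ?_⟩
    have h0 : chainLength [a] = 0 := rfl
    rw [h0]
    positivity

lemma pair_mem_prefix {l l₁ l₂ : List (X × X)} {x : X × X}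
    (hsort : List.Pairwise (fun a b : X × X => dist a.1 a.2 ≤ dist b.1 b.2) l)
    (hl : l = l₁ ++ x :: l₂) {a b : X}
    (hab : (a, b) ∈ l ∨ (b, a) ∈ l) (hdist : dist a b < dist x.1 x.2) :
    (a, b) ∈ l₁ ∨ (b, a) ∈ l₁ := by
  subst hl
  have key : ∀ y : X × X, y ∈ x :: l₂ → dist x.1 x.2 ≤ dist y.1 y.2 := by
    intro y hy
    rcases List.mem_cons.mp hy with rfl | hy
    · exact le_refl _
    · have := (List.pairwise_append.mp hsort).2.1
      exact (List.pairwise_cons.mp this).1 y hy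
  rcases hab with h | h
  · rcases List.mem_append.mp h with h | h
    · exact Or.inl h
    · exact absurd (key _ h) (by simpa using hdist.not_ge)
  · rcases List.mem_append.mp h with h | h
    · exact Or.inr h
    · have h2 : dist x.1 x.2 ≤ dist b a := key _ h
      rw [dist_comm b a] at h2
      exact absurd h2 hdist.not_ge

lemma spanner_prefix {t : ℝ} (ht : 1 ≤ t) {V : Finset X} {l l₁ l₂ : List (X × X)} {x : X × X}
    (hsort : List.Pairwise (fun a b : X × X => dist a.1 a.2 ≤ dist b.1 b.2) l)
    (hcomp : ∀ P ∈ V, ∀ Q ∈ V, P ≠ Q → (P, Q) ∈ l ∨ (Q, P) ∈ l)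
    (hl : l = l₁ ++ x :: l₂) {a b : X}
    (ha : a ∈ V) (hb : b ∈ V) (hdist : dist a b < dist x.1 x.2) :
    ∃ p : List X, IsPathIn (↑(List.foldl (greedyStep t) ∅ l₁)) p a b ∧
      chainLength p ≤ t * dist a b := by
  rcases eq_or_ne a b with rfl | hne
  · exact spanner_of_mem ht (Or.inr (Or.inr rfl))
  · have h := pair_mem_prefix hsort hl (hcomp a ha b hb hne) hdist
    exact spanner_of_mem ht (h.imp id Or.inl)

lemma no_shortcut {Y : Type*} [MetricSpace Y] {t : ℝ} (ht : 1 < t) (V : Finset Y) (l : List (Y × Y))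
    (hmem : ∀ e ∈ l, e.1 ∈ V ∧ e.2 ∈ V ∧ e.1 ≠ e.2)
    (hsort : List.Pairwise (fun a b : Y × Y => dist a.1 a.2 ≤ dist b.1 b.2) l)
    (hcomp : ∀ P ∈ V, ∀ Q ∈ V, P ≠ Q → (P, Q) ∈ l ∨ (Q, P) ∈ l)
    (M N P Q : Y)
    (hMN : (M, N) ∈ naiveGreedy t l) (hPQ : (P, Q) ∈ naiveGreedy t l)
    (hne : (M, N) ≠ (P, Q))
    (hlen : dist P Q ≤ dist M N)
    (hineq : t * dist M P + dist P Q + t * dist Q N ≤ t * dist M N) : False := by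
  obtain ⟨l₁, l₂, hl, hnoMN⟩ := mem_foldl_analysis t l (M, N) hMN
  obtain ⟨k₁, k₂, hk, hnoPQ⟩ := mem_foldl_analysis t l (P, Q) hPQ
  have hMNl : (M, N) ∈ l := by rw [hl]; simp
  have hPQl : (P, Q) ∈ l := by rw [hk]; simp
  obtain ⟨hMV, hNV, hMNne⟩ := hmem _ hMNl
  obtain ⟨hPV, hQV, hPQne⟩ := hmem _ hPQl
  have ht0 : (0:ℝ) < t := by linarith
  have hdPQ : (0:ℝ) < dist P Q := dist_pos.mpr hPQne
  have hdMN : (0:ℝ) < dist M N := dist_pos.mpr hMNne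
  have hMP : dist M P < dist M N := by nlinarith [dist_nonneg (x := Q) (y := N)]
  have hQN : dist Q N < dist M N := by nlinarith [dist_nonneg (x := M) (y := P)]
  have heq : l₁ ++ (M, N) :: l₂ = k₁ ++ (P, Q) :: k₂ := hl.symm.trans hk
  rcases lt_trichotomy l₁.length k₁.length with hlt | heqlen | hgt
  · -- (M,N) inserted earlier; contradiction at (P,Q)'s insertion
    obtain ⟨m, hk₁, -⟩ := eq_append_of_lt_length heq hlt
    have hMNk₁ : (M, N) ∈ List.foldl (greedyStep t) ∅ k₁ := by
      apply foldl_prefix_subset t (l₁ := l₁ ++ [(M, N)]) ⟨m, by rw [hk₁]; simp⟩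
      exact mem_insert_step t l₁ (M, N) hnoMN
    have hsk := hsort
    rw [hk] at hsk
    have h1 : dist M N ≤ dist P Q :=
      (List.pairwise_append.mp hsk).2.2 (M, N) (by rw [hk₁]; simp) (P, Q) (by simp)
    have heqd : dist M N = dist P Q := le_antisymm h1 hlen
    have hPM' : dist P M < dist P Q := by rw [dist_comm]; linarith
    have hNQ' : dist N Q < dist P Q := by rw [dist_comm]; linarith
    obtain ⟨p₁, hp₁, hc₁⟩ := spanner_prefix ht.le hsort hcomp hk hPV hMV hPM'
    obtain ⟨p₂, hp₂, hc₂⟩ := spanner_prefix ht.le hsort hcomp hk hNV hQV hNQ'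
    obtain ⟨hpath, hlen3⟩ := path_concat hp₁ hp₂ (Or.inl (by exact_mod_cast hMNk₁))
    refine hnoPQ ⟨p₁ ++ p₂, hpath, ?_⟩
    have e1 : dist P M = dist M P := dist_comm P M
    have e2 : dist N Q = dist Q N := dist_comm N Q
    rw [hlen3]
    nlinarith
  · -- same position: edges equal, contradiction
    obtain ⟨-, h2⟩ := List.append_inj heq heqlen
    exact hne (by injection h2 with h3 _)
  · -- (P,Q) inserted earlier; contradiction at (M,N)'s insertion
    obtain ⟨m, hl₁, -⟩ := eq_append_of_lt_length heq.symm hgt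
    have hPQl₁ : (P, Q) ∈ List.foldl (greedyStep t) ∅ l₁ := by
      apply foldl_prefix_subset t (l₁ := k₁ ++ [(P, Q)]) ⟨m, by rw [hl₁]; simp⟩
      exact mem_insert_step t k₁ (P, Q) hnoPQ
    obtain ⟨p₁, hp₁, hc₁⟩ := spanner_prefix ht.le hsort hcomp hl hMV hPV hMP
    obtain ⟨p₂, hp₂, hc₂⟩ := spanner_prefix ht.le hsort hcomp hl hQV hNV hQN
    obtain ⟨hpath, hlen3⟩ := path_concat hp₁ hp₂ (Or.inl (by exact_mod_cast hPQl₁))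
    refine hnoMN ⟨p₁ ++ p₂, hpath, ?_⟩
    rw [hlen3]
    linarith


lemma norm_le_abs_add {F : Type*} [NormedAddCommGroup F] [InnerProductSpace ℝ F]
    {x u y : F} {c e : ℝ} (hu : ‖u‖ = 1) (h : x = c • u + e • y) :
    ‖x‖ ≤ |c| + |e| * ‖y‖ := by
  rw [h]
  refine (norm_add_le _ _).trans ?_
  rw [norm_smul, norm_smul, hu, mul_one, Real.norm_eq_abs, Real.norm_eq_abs]



set_option maxHeartbeats 2000000 in
/-- **Intersecting almost-parallel greedy edges are endpoint-ordered.**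
Let `t > 1`, `0 ≤ θ < (t−1)/(2t)`, and let `MN` and `PQ` be two edges of a
greedy `t`-spanner in the Euclidean plane that intersect at an interior point
and make angle at most `θ` with each other. Then, projecting onto the common
baseline (the direction of `MN`), neither projection interval is contained in
the other. -/
theorem intersecting_edges_endpoint_ordered {t θ : ℝ} (ht : 1 < t)
    (hθ0 : 0 ≤ θ) (hθ : θ < (t - 1) / (2 * t))
    (V : Finset E2) (l : List (E2 × E2))
    (hmem : ∀ e ∈ l, e.1 ∈ V ∧ e.2 ∈ V ∧ e.1 ≠ e.2)
    (hsort : List.Pairwise (fun a b => dist a.1 a.2 ≤ dist b.1 b.2) l)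
    (hcomp : ∀ P ∈ V, ∀ Q ∈ V, P ≠ Q → (P, Q) ∈ l ∨ (Q, P) ∈ l)
    (M N P Q : E2)
    (hMN : (M, N) ∈ naiveGreedy t l) (hPQ : (P, Q) ∈ naiveGreedy t l)
    (hne : (M, N) ≠ (P, Q))
    (hangle : InnerProductGeometry.angle (N - M) (Q - P) ≤ θ)
    (hcross : ∃ z : E2, z ∈ openSegment ℝ M N ∧ z ∈ openSegment ℝ P Q) :
    ¬ Set.uIcc (⟪P, N - M⟫ : ℝ) ⟪Q, N - M⟫ ⊆
        Set.uIcc (⟪M, N - M⟫ : ℝ) ⟪N, N - M⟫ ∧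
      ¬ Set.uIcc (⟪M, N - M⟫ : ℝ) ⟪N, N - M⟫ ⊆
        Set.uIcc (⟪P, N - M⟫ : ℝ) ⟪Q, N - M⟫ := by
  obtain ⟨l₁', l₂', hl', -⟩ := mem_foldl_analysis t l (M, N) hMN
  have hMNl : (M, N) ∈ l := by rw [hl']; simp
  obtain ⟨k₁', k₂', hk', -⟩ := mem_foldl_analysis t l (P, Q) hPQ
  have hPQl : (P, Q) ∈ l := by rw [hk']; simp
  obtain ⟨hMV, hNV, hMNne⟩ := hmem _ hMNl
  obtain ⟨hPV, hQV, hPQne⟩ := hmem _ hPQl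
  have ht0 : (0:ℝ) < t := by linarith
  set d := N - M with hd_def
  set w := Q - P with hw_def
  have hd : d ≠ 0 := sub_ne_zero.mpr (Ne.symm hMNne)
  have hw : w ≠ 0 := sub_ne_zero.mpr (Ne.symm hPQne)
  set D := ‖d‖ with hD_def
  set W := ‖w‖ with hW_def
  have hD : 0 < D := norm_pos_iff.mpr hd
  have hW : 0 < W := norm_pos_iff.mpr hw
  set α := InnerProductGeometry.angle d w with hα_def
  set cα := Real.cos α with hcα_def
  set sα := Real.sin α with hsα_def
  have hα0 : 0 ≤ α := InnerProductGeometry.angle_nonneg d w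
  have hαθ : α ≤ θ := hangle
  have hsα0 : 0 ≤ sα := Real.sin_nonneg_of_nonneg_of_le_pi hα0
    (InnerProductGeometry.angle_le_pi d w)
  have hsαα : sα ≤ α := Real.sin_le hα0
  have hcαq : 1 - α ^ 2 / 2 ≤ cα := Real.one_sub_sq_div_two_le_cos
  have hcα1 : cα ≤ 1 := Real.cos_le_one α
  have h2t : θ * (2 * t) < t - 1 := (lt_div_iff₀ (by linarith)).mp hθ
  have hθhalf : θ < 1 / 2 := by
    have h : (t - 1) / (2 * t) < 1 / 2 := by
      rw [div_lt_iff₀ (by linarith : (0:ℝ) < 2 * t)]; linarith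
    linarith
  have hαθ2 : α ^ 2 ≤ θ ^ 2 := pow_le_pow_left₀ hα0 hαθ 2
  have key : 1 ≤ t * (cα - sα) := by
    have k1 : t * (1 - α ^ 2 / 2) ≤ t * cα := mul_le_mul_of_nonneg_left hcαq ht0.le
    have k2 : t * α ^ 2 ≤ t * θ ^ 2 := mul_le_mul_of_nonneg_left hαθ2 ht0.le
    have k3 : θ ^ 2 ≤ θ * (1 / 2) := by rw [pow_two]; exact mul_le_mul_of_nonneg_left hθhalf.le hθ0
    have k4 : t * θ ^ 2 ≤ t * (θ * (1 / 2)) := mul_le_mul_of_nonneg_left k3 ht0.le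
    have k5 : t * sα ≤ t * θ := mul_le_mul_of_nonneg_left (hsαα.trans hαθ) ht0.le
    linarith only [k1, k2, k4, k5, h2t, ht]
  have hcα0 : 0 < cα := by
    by_contra h
    push_neg at h
    have h2 : t * (cα - sα) ≤ 0 := mul_nonpos_iff.mpr (Or.inl ⟨ht0.le, by linarith only [h, hsα0]⟩)
    linarith only [h2, key]
  have hdw : (⟪d, w⟫ : ℝ) = cα * (D * W) :=
    (InnerProductGeometry.cos_angle_mul_norm_mul_norm d w).symm
  have hpyth : Real.sin α ^ 2 + Real.cos α ^ 2 = 1 := Real.sin_sq_add_cos_sq α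
  -- unit vectors and perpendicular components
  set u := D⁻¹ • d with hu_def
  have hDu : D • u = d := by
    rw [hu_def, smul_smul, mul_inv_cancel₀ (ne_of_gt hD), one_smul]
  have hu : ‖u‖ = 1 := by
    rw [hu_def, norm_smul, norm_inv, Real.norm_eq_abs, abs_of_pos hD, ← hD_def]
    field_simp
  set v := W⁻¹ • w with hv_def
  have hWv : W • v = w := by
    rw [hv_def, smul_smul, mul_inv_cancel₀ (ne_of_gt hW), one_smul]
  have hv : ‖v‖ = 1 := by
    rw [hv_def, norm_smul, norm_inv, Real.norm_eq_abs, abs_of_pos hW, ← hW_def]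
    field_simp
  have hwu : (⟪w, u⟫ : ℝ) = W * cα := by
    rw [hu_def, real_inner_smul_right, real_inner_comm, hdw]
    field_simp
  have hdv : (⟪d, v⟫ : ℝ) = D * cα := by
    rw [hv_def, real_inner_smul_right, hdw]
    field_simp
  set w' := w - (W * cα) • u with hw'_def
  set d' := d - (D * cα) • v with hd'_def
  have hw'u : (⟪w', u⟫ : ℝ) = 0 := by
    rw [hw'_def, inner_sub_left, real_inner_smul_left, real_inner_self_eq_norm_mul_norm, hu, hwu]
    ring
  have hd'v : (⟪d', v⟫ : ℝ) = 0 := by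
    rw [hd'_def, inner_sub_left, real_inner_smul_left, real_inner_self_eq_norm_mul_norm, hv, hdv]
    ring
  have hw'norm : ‖w'‖ = W * sα := by
    have hsq : ‖w'‖ ^ 2 = (W * sα) ^ 2 := by
      have h1 : w = w' + (W * cα) • u := by rw [hw'_def]; abel
      have h2 : W ^ 2 = ‖w' + (W * cα) • u‖ ^ 2 := by rw [← h1, hW_def]
      rw [norm_add_sq_real, real_inner_smul_right, hw'u, norm_smul, hu, Real.norm_eq_abs] at h2
      rw [mul_one, sq_abs] at h2
      have h3 : W ^ 2 * (sα ^ 2 + cα ^ 2) = W ^ 2 := by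
        rw [hsα_def, hcα_def, hpyth]; ring
      linarith only [h2, h3]
    rw [← Real.sqrt_sq (norm_nonneg w'), ← Real.sqrt_sq (by positivity : 0 ≤ W * sα), hsq]
  have hd'norm : ‖d'‖ = D * sα := by
    have hsq : ‖d'‖ ^ 2 = (D * sα) ^ 2 := by
      have h1 : d = d' + (D * cα) • v := by rw [hd'_def]; abel
      have h2 : D ^ 2 = ‖d' + (D * cα) • v‖ ^ 2 := by rw [← h1, hD_def]
      rw [norm_add_sq_real, real_inner_smul_right, hd'v, norm_smul, hv, Real.norm_eq_abs] at h2
      rw [mul_one, sq_abs] at h2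
      have h3 : D ^ 2 * (sα ^ 2 + cα ^ 2) = D ^ 2 := by
        rw [hsα_def, hcα_def, hpyth]; ring
      linarith only [h2, h3]
    rw [← Real.sqrt_sq (norm_nonneg d'), ← Real.sqrt_sq (by positivity : 0 ≤ D * sα), hsq]
  -- the crossing point
  obtain ⟨z, hz1, hz2⟩ := hcross
  obtain ⟨a₁, b₁, ha₁, hb₁, hab₁, hz₁⟩ := hz1
  obtain ⟨a₂, b₂, ha₂, hb₂, hab₂, hz₂⟩ := hz2
  have hb₁1 : b₁ < 1 := by linarith
  have hb₂1 : b₂ < 1 := by linarith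
  have hzM : z - M = b₁ • d := by
    rw [← hz₁, hd_def, show a₁ = 1 - b₁ by linarith]; module
  have hzP : z - P = b₂ • w := by
    rw [← hz₂, hw_def, show a₂ = 1 - b₂ by linarith]; module
  have hPM : P - M = b₁ • d - b₂ • w := by rw [← hzM, ← hzP]; abel
  have hNQ : N - Q = (1 - b₁) • d - (1 - b₂) • w := by
    have h1 : N - Q = d - w - (P - M) := by rw [hd_def, hw_def]; abel
    rw [h1, hPM]; module
  -- inner products with the baseline d
  have hdd : (⟪d, d⟫ : ℝ) = D ^ 2 := by
    rw [real_inner_self_eq_norm_mul_norm, ← hD_def]; ring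
  have hwd : (⟪w, d⟫ : ℝ) = cα * (D * W) := by rw [real_inner_comm]; exact hdw
  have hiP : (⟪P, d⟫ : ℝ) - ⟪M, d⟫ = D * (b₁ * D - b₂ * (W * cα)) := by
    rw [← inner_sub_left, hPM, inner_sub_left, real_inner_smul_left, real_inner_smul_left,
      hdd, hwd]
    ring
  have hiN : (⟪N, d⟫ : ℝ) - ⟪Q, d⟫ = D * ((1 - b₁) * D - (1 - b₂) * (W * cα)) := by
    rw [← inner_sub_left, hNQ, inner_sub_left, real_inner_smul_left, real_inner_smul_left,
      hdd, hwd]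
    ring
  have hiNM : (⟪N, d⟫ : ℝ) - ⟪M, d⟫ = D ^ 2 := by
    rw [← inner_sub_left, ← hd_def, hdd]
  have hiQP : (⟪Q, d⟫ : ℝ) - ⟪P, d⟫ = cα * (D * W) := by
    rw [← inner_sub_left, ← hw_def, hwd]
  -- distance bounds: projections along d
  have hbX1 : dist M P ≤ |b₁ * D - b₂ * (W * cα)| + b₂ * (W * sα) := by
    have h1 : P - M = (b₁ * D - b₂ * (W * cα)) • u + (-b₂) • w' := by
      rw [hPM, hw'_def, ← hDu]; module
    have h2 : dist M P = ‖P - M‖ := by rw [dist_eq_norm']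
    rw [h2]
    refine (norm_le_abs_add hu h1).trans ?_
    rw [hw'norm, abs_neg, abs_of_pos hb₂]
  have hbX2 : dist Q N ≤ |(1 - b₁) * D - (1 - b₂) * (W * cα)| + (1 - b₂) * (W * sα) := by
    have h1 : N - Q = ((1 - b₁) * D - (1 - b₂) * (W * cα)) • u + (-(1 - b₂)) • w' := by
      rw [hNQ, hw'_def, ← hDu]; module
    have h2 : dist Q N = ‖N - Q‖ := by rw [dist_eq_norm']
    rw [h2]
    refine (norm_le_abs_add hu h1).trans ?_
    rw [hw'norm, abs_neg, abs_of_pos (by linarith : (0:ℝ) < 1 - b₂)]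
  -- distance bounds: projections along w
  have hbY1 : dist M P ≤ |b₂ * W - b₁ * (D * cα)| + b₁ * (D * sα) := by
    have h1 : M - P = (b₂ * W - b₁ * (D * cα)) • v + (-b₁) • d' := by
      have h0 : M - P = b₂ • w - b₁ • d := by rw [← neg_sub P M, hPM]; abel
      rw [h0, hd'_def, ← hWv]; module
    have h2 : dist M P = ‖M - P‖ := by rw [dist_eq_norm]
    rw [h2]
    refine (norm_le_abs_add hv h1).trans ?_
    rw [hd'norm, abs_neg, abs_of_pos hb₁]
  have hbY2 : dist Q N ≤ |(1 - b₂) * W - (1 - b₁) * (D * cα)| + (1 - b₁) * (D * sα) := by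
    have h1 : Q - N = ((1 - b₂) * W - (1 - b₁) * (D * cα)) • v + (-(1 - b₁)) • d' := by
      have h0 : Q - N = (1 - b₂) • w - (1 - b₁) • d := by rw [← neg_sub N Q, hNQ]; abel
      rw [h0, hd'_def, ← hWv]; module
    have h2 : dist Q N = ‖Q - N‖ := by rw [dist_eq_norm]
    rw [h2]
    refine (norm_le_abs_add hv h1).trans ?_
    rw [hd'norm, abs_neg, abs_of_pos (by linarith : (0:ℝ) < 1 - b₁)]
  have hdMN : dist M N = D := by rw [dist_eq_norm', ← hd_def, hD_def]
  have hdPQ : dist P Q = W := by rw [dist_eq_norm', ← hw_def, hW_def]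
  have hmn : (⟪M, d⟫ : ℝ) ≤ ⟪N, d⟫ := by linarith only [sq_nonneg D, hiNM]
  have hpq : (⟪P, d⟫ : ℝ) ≤ ⟪Q, d⟫ := by
    have h0 : 0 ≤ cα * (D * W) := mul_nonneg hcα0.le (mul_nonneg hD.le hW.le)
    linarith only [hiQP, h0]
  constructor
  · -- PQ's projection inside MN's projection
    intro hsub
    rw [Set.uIcc_of_le hpq, Set.uIcc_of_le hmn] at hsub
    have hP' := hsub (Set.left_mem_Icc.mpr hpq)
    have hQ' := hsub (Set.right_mem_Icc.mpr hpq)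
    rw [Set.mem_Icc] at hP' hQ'
    have hX1 : 0 ≤ b₁ * D - b₂ * (W * cα) :=
      le_of_mul_le_mul_left (by rw [mul_zero]; linarith only [hP'.1, hiP]) hD
    have hX2 : 0 ≤ (1 - b₁) * D - (1 - b₂) * (W * cα) :=
      le_of_mul_le_mul_left (by rw [mul_zero]; linarith only [hQ'.2, hiN]) hD
    rw [abs_of_nonneg hX1] at hbX1
    rw [abs_of_nonneg hX2] at hbX2
    have c1 := mul_le_mul_of_nonneg_left hbX1 ht0.le
    have c2 := mul_le_mul_of_nonneg_left hbX2 ht0.le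
    have c3 : 0 ≤ W * (t * (cα - sα) - 1) := mul_nonneg hW.le (by linarith only [key])
    rcases le_total W D with hWD | hDW
    · refine no_shortcut ht V l hmem hsort hcomp M N P Q hMN hPQ hne ?_ ?_
      · rw [hdMN, hdPQ]; exact hWD
      · rw [hdMN, hdPQ]
        linarith only [c1, c2, c3]
    · refine no_shortcut ht V l hmem hsort hcomp P Q M N hPQ hMN (Ne.symm hne) ?_ ?_
      · rw [hdMN, hdPQ]; exact hDW
      · rw [hdMN, hdPQ, dist_comm P M, dist_comm N Q]
        have c4 : t * D ≤ t * W := mul_le_mul_of_nonneg_left hDW ht0.le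
        linarith only [c1, c2, c3, c4, hDW]
  · -- MN's projection inside PQ's projection
    intro hsub
    rw [Set.uIcc_of_le hpq, Set.uIcc_of_le hmn] at hsub
    have hM' := hsub (Set.left_mem_Icc.mpr hmn)
    have hN' := hsub (Set.right_mem_Icc.mpr hmn)
    rw [Set.mem_Icc] at hM' hN'
    have hX1 : b₁ * D - b₂ * (W * cα) ≤ 0 :=
      le_of_mul_le_mul_left (by rw [mul_zero]; linarith only [hM'.1, hiP]) hD
    have hX2 : (1 - b₁) * D - (1 - b₂) * (W * cα) ≤ 0 :=
      le_of_mul_le_mul_left (by rw [mul_zero]; linarith only [hN'.2, hiN]) hD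
    have hsq1 : (0:ℝ) ≤ 1 - cα ^ 2 := by
      have h9 := pow_le_one₀ hcα0.le hcα1 (n := 2); linarith only [h9]
    have hY1 : 0 ≤ b₂ * W - b₁ * (D * cα) := by
      have e1 : (b₁ * D - b₂ * (W * cα)) * cα ≤ 0 :=
        mul_nonpos_iff.mpr (Or.inr ⟨hX1, hcα0.le⟩)
      have e2 : 0 ≤ b₂ * W * (1 - cα ^ 2) :=
        mul_nonneg (mul_nonneg hb₂.le hW.le) hsq1
      linarith only [e1, e2]
    have hY2 : 0 ≤ (1 - b₂) * W - (1 - b₁) * (D * cα) := by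
      have e1 : ((1 - b₁) * D - (1 - b₂) * (W * cα)) * cα ≤ 0 :=
        mul_nonpos_iff.mpr (Or.inr ⟨hX2, hcα0.le⟩)
      have e2 : 0 ≤ (1 - b₂) * W * (1 - cα ^ 2) :=
        mul_nonneg (mul_nonneg (by linarith) hW.le) hsq1
      linarith only [e1, e2]
    rw [abs_of_nonneg hY1] at hbY1
    rw [abs_of_nonneg hY2] at hbY2
    have hDW : D ≤ W := by
      have h5 : D * D ≤ D * (cα * W) := by linarith only [hM'.1, hN'.2, hiNM, hiQP]
      have h6 : D ≤ cα * W := le_of_mul_le_mul_left h5 hD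
      have h7 : cα * W ≤ 1 * W := mul_le_mul_of_nonneg_right hcα1 hW.le
      linarith only [h6, h7]
    refine no_shortcut ht V l hmem hsort hcomp P Q M N hPQ hMN (Ne.symm hne) ?_ ?_
    · rw [hdMN, hdPQ]; exact hDW
    · rw [hdMN, hdPQ, dist_comm P M, dist_comm N Q]
      have c1 := mul_le_mul_of_nonneg_left hbY1 ht0.le
      have c2 := mul_le_mul_of_nonneg_left hbY2 ht0.le
      have c3 : 0 ≤ D * (t * (cα - sα) - 1) := mul_nonneg hD.le (by linarith only [key])
      linarith only [c1, c2, c3]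

end
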